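/- If f : E → [0,∞] is concave and 0 ∈ interior{x ∈ E : f(x) > 0}, then for every y ∈ E the map v ↦ f^p(y,v) is strictly increasing on {v > 0 : 0 < f^p(y,v) < ∞}. -/

import Mathlib

open Set
open scoped ENNReal RealInnerProductSpace

noncomputable section

variable {E : Type*} [NormedAddCommGroup E] [InnerProductSpace ℝ E] [FiniteDimensional ℝ E]

/-- The perspective function `f^p(y,v) = v·f(y/v)` (for `v > 0`). -/
def persp (f : E → ℝ≥0∞) (y : E) (v : ℝ) : ℝ≥0∞ := ENNReal.ofReal v * f (v⁻¹ • y)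

/-- The hypograph `hypo f = {(x,u) ∈ E × ℝ₊₊ : f(x) ≥ u}`. -/
def hypoSet (f : E → ℝ≥0∞) : Set (E × ℝ) :=
  {p : E × ℝ | 0 < p.2 ∧ ENNReal.ofReal p.2 ≤ f p.1}

/-- If `f` is concave and `0 ∈ interior{x : f(x) > 0}`, then for every `y` the map
`v ↦ f^p(y,v)` is strictly increasing on `{v > 0 : 0 < f^p(y,v) < ∞}`. -/
theorem concave_strict_increase (f : E → ℝ≥0∞)
    (hconc : Convex ℝ (hypoSet f))
    (h0 : (0 : E) ∈ interior {x : E | 0 < f x}) :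
    ∀ y : E, StrictMonoOn (persp f y)
      {v : ℝ | 0 < v ∧ 0 < persp f y v ∧ persp f y v ≠ ⊤} := by
  intro y v₁ hv₁ v₂ hv₂ hlt
  obtain ⟨hv₁0, hp1pos, hp1top⟩ := hv₁
  obtain ⟨hv₂0, hp2pos, hp2top⟩ := hv₂
  have hf0 : 0 < f 0 := by simpa using interior_subset h0
  obtain ⟨c, hc0, hcle⟩ : ∃ c : ℝ, 0 < c ∧ ENNReal.ofReal c ≤ f 0 := by
    rcases eq_or_ne (f 0) ⊤ with h | h
    · exact ⟨1, one_pos, by simp [h]⟩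
    · exact ⟨(f 0).toReal, ENNReal.toReal_pos hf0.ne' h,
        by rw [ENNReal.ofReal_toReal h]⟩
  have hov₁ : ENNReal.ofReal v₁ ≠ 0 := (ENNReal.ofReal_pos.mpr hv₁0).ne'
  have hf1top : f (v₁⁻¹ • y) ≠ ⊤ := by
    intro h
    apply hp1top
    simp [persp, h, ENNReal.mul_top, hov₁]
  have hf1pos : 0 < f (v₁⁻¹ • y) := by
    by_contra h
    push_neg at h
    have : f (v₁⁻¹ • y) = 0 := le_antisymm h zero_le
    simp [persp, this] at hp1pos
  set u₁ := (f (v₁⁻¹ • y)).toReal with hu₁def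
  have hu₁ : 0 < u₁ := ENNReal.toReal_pos hf1pos.ne' hf1top
  have hmem1 : ((v₁⁻¹ • y : E), u₁) ∈ hypoSet f :=
    ⟨hu₁, by rw [ENNReal.ofReal_toReal hf1top]⟩
  have hmem0 : ((0 : E), c) ∈ hypoSet f := ⟨hc0, hcle⟩
  have hv₂0' : (0 : ℝ) < v₂ := hv₂0
  set t := v₁ / v₂ with htdef
  have ht0 : 0 < t := div_pos hv₁0 hv₂0'
  have ht1 : t < 1 := (div_lt_one hv₂0').mpr hlt
  have hcomb := hconc (a := t) (b := 1 - t) hmem1 hmem0 (le_of_lt ht0) (by linarith) (by ring)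
  have hfst : t • (v₁⁻¹ • y) + (1 - t) • (0 : E) = v₂⁻¹ • y := by
    rw [smul_zero, add_zero, smul_smul, htdef]
    congr 1
    field_simp
  have hsnd : t * u₁ + (1 - t) * c = (t * u₁ + (1 - t) * c) := rfl
  have hle : ENNReal.ofReal (t * u₁ + (1 - t) * c) ≤ f (v₂⁻¹ • y) := by
    have := hcomb.2
    simp only [Prod.fst, Prod.snd, Prod.smul_mk, Prod.mk_add_mk, smul_eq_mul] at this
    rwa [hfst] at this
  have key : ENNReal.ofReal v₂ * ENNReal.ofReal (t * u₁ + (1 - t) * c)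
      ≤ persp f y v₂ := by
    exact mul_le_mul_right hle _
  rw [← ENNReal.ofReal_mul (le_of_lt hv₂0')] at key
  have harith : v₂ * (t * u₁ + (1 - t) * c) = v₁ * u₁ + (v₂ - v₁) * c := by
    simp only [htdef]; field_simp
  rw [harith] at key
  have hp1eq : persp f y v₁ = ENNReal.ofReal (v₁ * u₁) := by
    rw [persp, ENNReal.ofReal_mul (le_of_lt hv₁0), ENNReal.ofReal_toReal hf1top]
  rw [hp1eq]
  refine lt_of_lt_of_le ?_ key
  rw [ENNReal.ofReal_lt_ofReal_iff (by nlinarith)]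
  nlinarith
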